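/- Let H be a complex Hilbert space, 𝒱 and 𝒲 closed subspaces with H = 𝒱 ⊕ 𝒲ᗮ, P = π_{𝒱,𝒲ᗮ}, and ε ≥ 0. Let (W,w) be a fusion frame for 𝒲 with synthesis operator T_W, and let L : K_W → H be a bounded operator with ‖L T_W* − P‖ ≤ ε and range of L equal to 𝒱. For each i ∈ I assume V_i := L(M_i(K_W)) is a closed subspace, let v = (v_i)_{i∈I} be weights, assume (V,v) is a fusion Bessel sequence with synthesis operator T_V, and assume Q_{L,v} : K_W → K_V, (Q_{L,v} f)_i = v_i⁻¹ L(M_i f), is a well-defined bounded operator. Then T_V ∘ Q_{L,v} = L, Q_{L,v} is component preserving, the range of T_V equals 𝒱 (so (V,v) is a fusion frame for 𝒱), and ‖T_V Q_{L,v} T_W* − P‖ ≤ ε. -/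

import Mathlib

open scoped ENNReal
set_option synthInstance.maxHeartbeats 1000000
set_option maxHeartbeats 1000000
noncomputable section

/-- If `L` is an `ε`-approximate oblique left inverse of `T_W*` with range `𝒱`,
`V_i = L(M_i(K_W))` are closed, `(V,v)` is a fusion Bessel sequence and
`Q_{L,v} f = (v i⁻¹ L (M_i f))_i` is bounded, then `T_V ∘ Q_{L,v} = L`, `Q_{L,v}` is
component preserving, `(V,v)` is a fusion frame for `𝒱`, and
`‖T_V Q_{L,v} T_W* − P‖ ≤ ε`. -/
theorem approx_dual_from_leftInverse
    {H : Type*} [NormedAddCommGroup H] [InnerProductSpace ℂ H] [CompleteSpace H]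
    {I : Type*} [Countable I] [DecidableEq I]
    (𝒱 𝒲 : Submodule ℂ H) [CompleteSpace 𝒱] [CompleteSpace 𝒲]
    (P : H →L[ℂ] H) (hPidem : P ∘L P = P)
    (hPran : LinearMap.range (P : H →ₗ[ℂ] H) = 𝒱) (hPker : LinearMap.ker (P : H →ₗ[ℂ] H) = 𝒲ᗮ)
    (ε : ℝ) (hε : 0 ≤ ε)
    (W : I → Submodule ℂ H) [∀ i, CompleteSpace (W i)] (hW : ∀ i, W i ≤ 𝒲)
    (w : I → ℝ) (hw : ∀ i, 0 < w i)
    (TW : lp (fun i => W i) 2 →L[ℂ] H)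
    (hTW : ∀ g : lp (fun i => W i) 2, HasSum (fun i => (w i : ℂ) • (g i : H)) (TW g))
    (hWfr : LinearMap.range (TW : lp (fun i => W i) 2 →ₗ[ℂ] H) = 𝒲)
    (MW : I → (lp (fun i => W i) 2 →L[ℂ] lp (fun i => W i) 2))
    (hMW : ∀ (k : I) (g : lp (fun i => W i) 2) (j : I), MW k g j = if j = k then g j else 0)
    -- the approximate oblique left inverse L
    (L : lp (fun i => W i) 2 →L[ℂ] H)
    (hLapprox : ‖L ∘L ContinuousLinearMap.adjoint TW - P‖ ≤ ε)
    (hLran : LinearMap.range (L : lp (fun i => W i) 2 →ₗ[ℂ] H) = 𝒱)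
    -- the subspaces V_i = L(M_i(K_W)), assumed closed
    (V : I → Submodule ℂ H) [∀ i, CompleteSpace (V i)]
    (hVi : ∀ i, V i = LinearMap.range ((L ∘L MW i : lp (fun i => W i) 2 →L[ℂ] H) : lp (fun i => W i) 2 →ₗ[ℂ] H))
    (v : I → ℝ) (hv : ∀ i, 0 < v i)
    (TV : lp (fun i => V i) 2 →L[ℂ] H)
    (hTV : ∀ g : lp (fun i => V i) 2, HasSum (fun i => (v i : ℂ) • (g i : H)) (TV g))
    (MV : I → (lp (fun i => V i) 2 →L[ℂ] lp (fun i => V i) 2))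
    (hMV : ∀ (k : I) (g : lp (fun i => V i) 2) (j : I), MV k g j = if j = k then g j else 0)
    -- the operator Q_{L,v}
    (Q : lp (fun i => W i) 2 →L[ℂ] lp (fun i => V i) 2)
    (hQ : ∀ (f : lp (fun i => W i) 2) (i : I), (Q f i : H) = ((v i : ℂ))⁻¹ • L (MW i f)) :
    TV ∘L Q = L ∧
    (∀ i, LinearMap.range ((Q ∘L MW i : lp (fun i => W i) 2 →L[ℂ] lp (fun i => V i) 2) : lp (fun i => W i) 2 →ₗ[ℂ] lp (fun i => V i) 2) = LinearMap.range (MV i : lp (fun i => V i) 2 →ₗ[ℂ] lp (fun i => V i) 2)) ∧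
    LinearMap.range (TV : lp (fun i => V i) 2 →ₗ[ℂ] H) = 𝒱 ∧
    ‖TV ∘L Q ∘L ContinuousLinearMap.adjoint TW - P‖ ≤ ε := by
  have hvC : ∀ i, (v i : ℂ) ≠ 0 := fun i =>
    Complex.ofReal_ne_zero.mpr (ne_of_gt (hv i))
  -- MW i is idempotent-like facts
  have hMWidem : ∀ (i : I) (f : lp (fun i => W i) 2), MW i (MW i f) = MW i f := by
    intro i f
    apply lp.ext
    funext j
    rw [hMW, hMW]
    by_cases h : j = i <;> simp [h]
  have hMWzero : ∀ (i j : I), j ≠ i → ∀ f : lp (fun i => W i) 2, MW j (MW i f) = 0 := by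
    intro i j hji f
    apply lp.ext
    funext k
    rw [hMW, hMW]
    by_cases h : k = j
    · subst h; simp [hji]
    · simp [h]
  -- MW i f = lp.single 2 i (f i)
  have hMWsingle : ∀ (i : I) (f : lp (fun i => W i) 2), MW i f = lp.single 2 i (f i) := by
    intro i f
    apply lp.ext
    funext j
    rw [hMW, lp.single_apply]
    by_cases h : j = i
    · subst h; simp
    · simp [h]
  -- coordinates of Q (MW i f)
  have hQcoord : ∀ (i : I) (f : lp (fun i => W i) 2) (j : I),
      ((Q (MW i f) j : H)) = if j = i then ((v i : ℂ))⁻¹ • L (MW i f) else 0 := by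
    intro i f j
    rw [hQ]
    by_cases h : j = i
    · subst h; rw [hMWidem, if_pos rfl]
    · rw [hMWzero i j h]; simp [h]
  -- Part 1 : TV ∘L Q = L applied pointwise
  have h1 : ∀ f : lp (fun i => W i) 2, TV (Q f) = L f := by
    intro f
    have hs1 : HasSum (fun i => (v i : ℂ) • (Q f i : H)) (TV (Q f)) := hTV (Q f)
    have heq : (fun i => (v i : ℂ) • (Q f i : H)) = fun i => L (MW i f) := by
      funext i
      rw [hQ, smul_inv_smul₀ (hvC i)]
    rw [heq] at hs1
    have hs2 : HasSum (fun i => MW i f) f := by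
      have := lp.hasSum_single (E := fun i => W i) (p := 2) (by norm_num) f
      convert this using 2 with i
      exact hMWsingle i f
    have hs3 : HasSum (fun i => L (MW i f)) (L f) := L.hasSum hs2
    exact hs1.unique hs3
  have h1' : TV ∘L Q = L := ContinuousLinearMap.ext h1
  refine ⟨h1', ?_, ?_, ?_⟩
  · -- component preserving
    intro i
    apply le_antisymm
    · rintro _ ⟨f, rfl⟩
      refine ⟨Q (MW i f), ?_⟩
      apply lp.ext
      funext j
      simp only [ContinuousLinearMap.coe_coe]
      rw [hMV]
      simp only [ContinuousLinearMap.comp_apply]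
      by_cases h : j = i
      · rw [if_pos h]
      · rw [if_neg h]
        symm
        apply Subtype.ext
        show ((Q (MW i f) j : H)) = ((0 : V j) : H)
        rw [hQcoord, if_neg h]
        rfl
    · rintro _ ⟨g, rfl⟩
      obtain ⟨f0, hf0⟩ := (SetLike.ext_iff.mp (hVi i) ((g i : H))).mp (g i).2
      refine ⟨(v i : ℂ) • f0, ?_⟩
      apply lp.ext
      funext j
      simp only [ContinuousLinearMap.coe_coe]
      rw [hMV]
      apply Subtype.ext
      show (((Q ∘L MW i) ((v i : ℂ) • f0) j : H)) = (((if j = i then g j else 0) : V j) : H)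
      simp only [ContinuousLinearMap.comp_apply, map_smul, lp.coeFn_smul, Pi.smul_apply,
        Submodule.coe_smul]
      rw [hQcoord]
      by_cases h : j = i
      · subst h
        rw [if_pos rfl, if_pos rfl, smul_smul, mul_inv_cancel₀ (hvC j), one_smul]
        exact hf0
      · rw [if_neg h, if_neg h, smul_zero]
        rfl
  · -- range TV = 𝒱
    apply le_antisymm
    · rintro _ ⟨g, rfl⟩
      have hs : HasSum (fun i => (v i : ℂ) • (g i : H)) (TV g) := hTV g
      have hmem : ∀ i, (v i : ℂ) • (g i : H) ∈ 𝒱 := by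
        intro i
        apply Submodule.smul_mem
        obtain ⟨f, hf⟩ := (SetLike.ext_iff.mp (hVi i) ((g i : H))).mp (g i).2
        rw [← hLran]
        exact ⟨MW i f, hf⟩
      have hclosed : IsClosed (𝒱 : Set H) :=
        (completeSpace_coe_iff_isComplete.mp inferInstance).isClosed
      refine hclosed.mem_of_tendsto hs ?_
      filter_upwards with s
      exact Submodule.sum_mem 𝒱 fun i _ => hmem i
    · rw [← hLran]
      rintro _ ⟨f, rfl⟩
      exact ⟨Q f, h1 f⟩
  · have : TV ∘L Q ∘L ContinuousLinearMap.adjoint TW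
        = (TV ∘L Q) ∘L ContinuousLinearMap.adjoint TW := rfl
    rw [this, h1']
    exact hLapprox
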